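/- Let C be a nonempty weak* compact convex subset of a dual Banach space, let {T₁, …, T_{n+1}} be commuting weak*-continuous nonexpansive self-maps of C, and let R_n : C → ⋂_{i≤n} Fix T_i be a nonexpansive retraction. Set R̃ x = (1/2)x + (1/2)T_{n+1}R_n x. Then for every x ∈ C and every subnet (R̃^{k_α} x) of the iterates, setting r_α = R̃^{k_α} x one has lim_α ‖T_{n+1} R_n r_α − r_α‖ = 0, lim_α ‖R_n r_α − r_α‖ = 0, and lim_α ‖T_m r_α − r_α‖ = 0 for every m ≤ n+1. -/

import Mathlib

open Filter Topology


/-- Ishikawa asymptotic regularity for the midpoint averaged map, in sequence form. -/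
lemma ishikawa_aux {F : Type*} [NormedAddCommGroup F] [NormedSpace ℝ F]
    {u v : ℕ → F} {M : ℝ}
    (hrec : ∀ k, u (k + 1) = (1 / 2 : ℝ) • u k + (1 / 2 : ℝ) • v k)
    (hne : ∀ i j, ‖v i - v j‖ ≤ ‖u i - u j‖)
    (hbdd : ∀ i j, ‖v i - u j‖ ≤ M) :
    Tendsto (fun k => ‖v k - u k‖) atTop (𝓝 0) := by
  set d : ℕ → ℝ := fun k => ‖v k - u k‖ with hd
  have hstep : ∀ k, u (k + 1) - u k = (1 / 2 : ℝ) • (v k - u k) := by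
    intro k; rw [hrec k]; module
  have hstepnorm : ∀ k, ‖u (k + 1) - u k‖ = (1 / 2) * d k := by
    intro k; rw [hstep k, norm_smul]; simp [Real.norm_eq_abs, hd]
  have hanti1 : ∀ k, d (k + 1) ≤ d k := by
    intro k
    have key : v (k + 1) - u (k + 1) = (v (k + 1) - v k) + (1 / 2 : ℝ) • (v k - u k) := by
      rw [hrec k]; module
    calc d (k + 1) = ‖(v (k + 1) - v k) + (1 / 2 : ℝ) • (v k - u k)‖ := by
          show ‖v (k + 1) - u (k + 1)‖ = _; rw [key]
      _ ≤ ‖v (k + 1) - v k‖ + ‖(1 / 2 : ℝ) • (v k - u k)‖ := norm_add_le _ _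
      _ ≤ ‖u (k + 1) - u k‖ + (1 / 2) * d k := by
          rw [norm_smul]
          gcongr
          · exact hne _ _
          · simp [Real.norm_eq_abs]
      _ = d k := by rw [hstepnorm k]; ring
  have hanti : Antitone d := antitone_nat_of_succ_le hanti1
  have hdnn : ∀ k, (0 : ℝ) ≤ d k := fun k => norm_nonneg _
  have htele : ∀ i N, ‖u (i + N) - u i‖ ≤ (N / 2 : ℝ) * d i := by
    intro i N
    induction N with
    | zero => simp
    | succ N ih =>
      have h1 : ‖u (i + (N + 1)) - u i‖ ≤ ‖u (i + N + 1) - u (i + N)‖ + ‖u (i + N) - u i‖ := by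
        rw [show i + (N + 1) = i + N + 1 by omega]
        exact norm_sub_le_norm_sub_add_norm_sub _ _ _
      have h2 : d (i + N) ≤ d i := hanti (Nat.le_add_right i N)
      have h3 := hstepnorm (i + N)
      push_cast
      push_cast at ih
      nlinarith [hdnn i]
  have hkey : ∀ (N i : ℕ), (1 + N / 2 : ℝ) * d i ≤ ‖v (i + N) - u i‖ + 2 ^ N * (d i - d (i + N)) := by
    intro N
    induction N with
    | zero => intro i; simp [hd]
    | succ N ih =>
      intro i
      have hid : v (i + (N + 1)) - u i =
          (2 : ℝ) • (v (i + (N + 1)) - u (i + 1)) - (v (i + (N + 1)) - v i) := by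
        rw [hrec i]; module
      have h1 : 2 * ‖v (i + (N + 1)) - u (i + 1)‖ - ‖u (i + (N + 1)) - u i‖
          ≤ ‖v (i + (N + 1)) - u i‖ := by
        have e1 : ‖(2 : ℝ) • (v (i + (N + 1)) - u (i + 1))‖ - ‖v (i + (N + 1)) - v i‖
            ≤ ‖v (i + (N + 1)) - u i‖ := by
          rw [hid]; exact norm_sub_norm_le _ _
        have e2 : ‖(2 : ℝ) • (v (i + (N + 1)) - u (i + 1))‖
            = 2 * ‖v (i + (N + 1)) - u (i + 1)‖ := by
          rw [norm_smul]; simp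
        have e3 : ‖v (i + (N + 1)) - v i‖ ≤ ‖u (i + (N + 1)) - u i‖ := hne _ _
        linarith
      have ihs := ih (i + 1)
      rw [show i + 1 + N = i + (N + 1) by omega] at ihs
      have h3 := htele i (N + 1)
      have hd1 : d (i + 1) ≤ d i := hanti1 i
      have hdN : d (i + (N + 1)) ≤ d (i + 1) := hanti (by omega)
      have hpow : (N + 2 : ℝ) ≤ 2 ^ (N + 1) := by
        have h := one_add_mul_le_pow (a := (1 : ℝ)) (by norm_num) (N + 1)
        have h2 : ((1 : ℝ) + 1) ^ (N + 1) = 2 ^ (N + 1) := by norm_num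
        push_cast at h ⊢
        rw [h2] at h
        linarith
      have hps : (2 : ℝ) ^ (N + 1) = 2 * 2 ^ N := by ring
      have hprod : (0 : ℝ) ≤ (2 ^ (N + 1) - (N + 2)) * (d i - d (i + 1)) := by
        apply mul_nonneg <;> linarith
      push_cast at h3 ihs ⊢
      nlinarith
  -- limit
  have hbd : BddBelow (Set.range d) := ⟨0, by rintro _ ⟨i, rfl⟩; exact hdnn i⟩
  have htend : Tendsto d atTop (𝓝 (⨅ i, d i)) := tendsto_atTop_ciInf hanti hbd
  set c := ⨅ i, d i with hc
  have hc0 : 0 ≤ c := le_ciInf hdnn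
  have hcle : ∀ i, c ≤ d i := fun i => ciInf_le hbd i
  have hM0 : (0 : ℝ) ≤ M := le_trans (norm_nonneg _) (hbdd 0 0)
  rcases eq_or_lt_of_le hc0 with h | h
  · rwa [← h] at htend
  · exfalso
    obtain ⟨N, hN⟩ := exists_nat_gt (2 * (M + 1) / c)
    have hNc : M + 1 < (1 + N / 2) * c := by
      have : 2 * (M + 1) / c < N := hN
      have h2 : 2 * (M + 1) < N * c := by
        rwa [div_lt_iff₀ h] at this
      nlinarith
    have hdiff : Tendsto (fun i => d i - d (i + N)) atTop (𝓝 0) := by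
      have h1 : Tendsto (fun i => d (i + N)) atTop (𝓝 c) :=
        htend.comp (tendsto_add_atTop_nat N)
      simpa using htend.sub h1
    have hpos : (0 : ℝ) < ((1 + N / 2) * c - M) / 2 ^ N := by
      apply div_pos (by linarith) (by positivity)
    obtain ⟨i, hi⟩ := (hdiff.eventually_lt_const hpos).exists
    have h2N : (0 : ℝ) < 2 ^ N := by positivity
    have hi' : 2 ^ N * (d i - d (i + N)) < (1 + N / 2) * c - M := by
      rw [lt_div_iff₀ h2N] at hi; nlinarith
    have := hkey N i
    have hci : (1 + N / 2 : ℝ) * c ≤ (1 + N / 2) * d i := by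
      apply mul_le_mul_of_nonneg_left (hcle i); positivity
    have hb := hbdd (i + N) i
    linarith

open Metric in

lemma bddC {E : Type*} [NormedAddCommGroup E] [NormedSpace ℝ E]
    {C : Set (WeakDual ℝ E)} (hne : C.Nonempty) (hcomp : IsCompact C) (hconv : Convex ℝ C) :
    ∃ M : ℝ, ∀ f ∈ C, ∀ g ∈ C, ‖WeakDual.toStrongDual (f - g)‖ ≤ M := by
  haveI : CompactSpace ↥C := isCompact_iff_compactSpace.mp hcomp
  haveI : Nonempty ↥C := hne.to_subtype
  set A : ℕ → Set ↥C := fun m => {f | ‖WeakDual.toStrongDual (f : WeakDual ℝ E)‖ ≤ m} with hA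
  have hAclosed : ∀ m, IsClosed (A m) := by
    intro m
    have h1 : IsClosed {f : WeakDual ℝ E | ‖WeakDual.toStrongDual f‖ ≤ (m : ℝ)} := by
      have := WeakDual.isClosed_closedBall (E := E) (𝕜 := ℝ) 0 m
      convert this using 1
      ext f
      simp [Metric.mem_closedBall, dist_zero_right]
    exact h1.preimage continuous_subtype_val
  have hAcover : ⋃ m, A m = Set.univ := by
    ext f
    simp only [Set.mem_iUnion, Set.mem_univ, iff_true, hA, Set.mem_setOf_eq]
    exact exists_nat_ge _
  obtain ⟨m, f0, hf0⟩ := nonempty_interior_of_iUnion_of_closed hAclosed hAcover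
  rw [mem_interior_iff_mem_nhds, nhds_subtype, Filter.mem_comap] at hf0
  obtain ⟨V, hV, hVsub⟩ := hf0
  obtain ⟨W, hWV, hWopen, hWmem⟩ := mem_nhds_iff.mp hV
  have hWbound : ∀ f ∈ C, f ∈ W → ‖WeakDual.toStrongDual f‖ ≤ (m : ℝ) := by
    intro f hf hfW
    have h0 : (⟨f, hf⟩ : ↥C) ∈ Subtype.val ⁻¹' V := Set.mem_preimage.mpr (hWV hfW)
    have h3 := hVsub h0
    simpa [hA] using h3
  -- tube lemma
  set φ : ℝ × WeakDual ℝ E → WeakDual ℝ E := fun p => (f0 : WeakDual ℝ E) + p.1 • (p.2 - f0) with hφ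
  have hφc : Continuous φ :=
    continuous_const.add (continuous_fst.smul (continuous_snd.sub continuous_const))
  have hsub : ({(0 : ℝ)} : Set ℝ) ×ˢ C ⊆ φ ⁻¹' W := by
    rintro ⟨t, f⟩ ⟨ht, hf⟩
    simp only [Set.mem_singleton_iff] at ht
    simp [φ, ht, hWmem]
  obtain ⟨uo, vo, huo, hvo, h0u, hCv, huv⟩ :=
    generalized_tube_lemma isCompact_singleton hcomp (hWopen.preimage hφc) hsub
  obtain ⟨ε, hε, hball⟩ := Metric.isOpen_iff.mp huo 0 (h0u rfl)
  set t0 : ℝ := min (ε / 2) 1 with ht0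
  have ht0pos : 0 < t0 := by positivity
  have ht0le : t0 ≤ 1 := min_le_right _ _
  have ht0u : t0 ∈ uo := by
    apply hball
    simp only [Metric.mem_ball, Real.dist_eq, sub_zero]
    rw [abs_of_pos ht0pos]
    calc t0 ≤ ε / 2 := min_le_left _ _
      _ < ε := by linarith
  have key : ∀ f ∈ C, ‖WeakDual.toStrongDual (f - (f0 : WeakDual ℝ E))‖
      ≤ ((m : ℝ) + ‖WeakDual.toStrongDual (f0 : WeakDual ℝ E)‖) / t0 := by
    intro f hf
    have hmem : φ (t0, f) ∈ W := huv (Set.mk_mem_prod ht0u (hCv hf))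
    have hmemC : φ (t0, f) ∈ C := by
      have heq : φ (t0, f) = (1 - t0) • (f0 : WeakDual ℝ E) + t0 • f := by
        simp only [hφ]; module
      rw [heq]
      exact hconv f0.2 hf (by linarith) (le_of_lt ht0pos) (by ring)
    have hb := hWbound _ hmemC hmem
    have heq2 : WeakDual.toStrongDual (φ (t0, f)) - WeakDual.toStrongDual (f0 : WeakDual ℝ E)
        = t0 • WeakDual.toStrongDual (f - (f0 : WeakDual ℝ E)) := by
      simp only [hφ]
      rw [map_add, map_smul, map_sub]
      abel
    have hnorm : t0 * ‖WeakDual.toStrongDual (f - (f0 : WeakDual ℝ E))‖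
        ≤ (m : ℝ) + ‖WeakDual.toStrongDual (f0 : WeakDual ℝ E)‖ := by
      have h1 : ‖WeakDual.toStrongDual (φ (t0, f)) - WeakDual.toStrongDual (f0 : WeakDual ℝ E)‖
          ≤ (m : ℝ) + ‖WeakDual.toStrongDual (f0 : WeakDual ℝ E)‖ :=
        le_trans (norm_sub_le _ _) (by gcongr)
      rw [heq2, norm_smul, Real.norm_eq_abs, abs_of_pos ht0pos] at h1
      exact h1
    rw [le_div_iff₀ ht0pos]
    linarith
  refine ⟨2 * (((m : ℝ) + ‖WeakDual.toStrongDual (f0 : WeakDual ℝ E)‖) / t0), ?_⟩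
  intro f hf g hg
  have h1 := key f hf
  have h2 := key g hg
  have heq : WeakDual.toStrongDual (f - g) = WeakDual.toStrongDual (f - (f0 : WeakDual ℝ E))
      - WeakDual.toStrongDual (g - (f0 : WeakDual ℝ E)) := by
    rw [← map_sub]; congr 1; abel
  rw [heq]
  calc _ ≤ ‖WeakDual.toStrongDual (f - (f0 : WeakDual ℝ E))‖
        + ‖WeakDual.toStrongDual (g - (f0 : WeakDual ℝ E))‖ := norm_sub_le _ _
    _ ≤ _ := by linarith


set_option maxHeartbeats 1000000

/-- For commuting weak*-continuous nonexpansive maps `T₁,…,T_{n+1}`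
on a nonempty weak* compact convex `C`, a nonexpansive retraction `Rₙ` of `C`
onto `⋂_{i≤n} Fix Tᵢ`, and `R̃ x = (1/2)x + (1/2)T_{n+1}(Rₙ x)`, every subnet
`r_α = R̃^{k_α} x` of the iterates at `x ∈ C` satisfies
`‖T_{n+1} Rₙ r_α − r_α‖ → 0`, `‖Rₙ r_α − r_α‖ → 0`, and `‖T_m r_α − r_α‖ → 0`
for every `m ≤ n+1`. -/
theorem stmt12 {E : Type*} [NormedAddCommGroup E] [NormedSpace ℝ E]
    (C : Set (WeakDual ℝ E)) (hne : C.Nonempty) (hcomp : IsCompact C) (hconv : Convex ℝ C)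
    (n : ℕ) (T : Fin (n + 1) → WeakDual ℝ E → WeakDual ℝ E)
    (hTmaps : ∀ i, Set.MapsTo (T i) C C)
    (hTc : ∀ i, ContinuousOn (T i) C)
    (hTne : ∀ i, ∀ y ∈ C, ∀ z ∈ C,
      ‖WeakDual.toStrongDual (T i y - T i z)‖ ≤ ‖WeakDual.toStrongDual (y - z)‖)
    (hcomm : ∀ i j, ∀ x ∈ C, T i (T j x) = T j (T i x))
    (R : WeakDual ℝ E → WeakDual ℝ E)
    (hRmaps : Set.MapsTo R C {x | x ∈ C ∧ ∀ i : Fin n, T i.castSucc x = x})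
    (hRfix : ∀ x, (x ∈ C ∧ ∀ i : Fin n, T i.castSucc x = x) → R x = x)
    (hRne : ∀ y ∈ C, ∀ z ∈ C,
      ‖WeakDual.toStrongDual (R y - R z)‖ ≤ ‖WeakDual.toStrongDual (y - z)‖)
    (x : WeakDual ℝ E) (hx : x ∈ C)
    {ι : Type*} (l : Filter ι) [l.NeBot] (k : ι → ℕ) (hk : Tendsto k l atTop) :
    letI Rt : WeakDual ℝ E → WeakDual ℝ E :=
      fun y => (1 / 2 : ℝ) • y + (1 / 2 : ℝ) • T (Fin.last n) (R y)
    letI r : ι → WeakDual ℝ E := fun α => Rt^[k α] x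
    Tendsto (fun α =>
        ‖WeakDual.toStrongDual (T (Fin.last n) (R (r α)) - r α)‖) l (𝓝 0) ∧
    Tendsto (fun α => ‖WeakDual.toStrongDual (R (r α) - r α)‖) l (𝓝 0) ∧
    ∀ m : Fin (n + 1),
      Tendsto (fun α => ‖WeakDual.toStrongDual (T m (r α) - r α)‖) l (𝓝 0) := by
  obtain ⟨M, hM⟩ := bddC hne hcomp hconv
  set Rt : WeakDual ℝ E → WeakDual ℝ E :=
    fun y => (1 / 2 : ℝ) • y + (1 / 2 : ℝ) • T (Fin.last n) (R y) with hRt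
  set S : WeakDual ℝ E → WeakDual ℝ E := fun y => T (Fin.last n) (R y) with hS
  set u : ℕ → WeakDual ℝ E := fun j => Rt^[j] x with hu
  have hRC : ∀ y ∈ C, R y ∈ C := fun y hy => (hRmaps hy).1
  have hSC : ∀ y ∈ C, S y ∈ C := fun y hy => hTmaps _ (hRC y hy)
  have hRtC : ∀ y ∈ C, Rt y ∈ C := fun y hy =>
    hconv hy (hSC y hy) (by norm_num) (by norm_num) (by norm_num)
  have huC : ∀ j, u j ∈ C := by
    intro j
    induction j with
    | zero => simpa [hu] using hx
    | succ j ih =>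
      have : u (j + 1) = Rt (u j) := Function.iterate_succ_apply' Rt j x
      rw [this]; exact hRtC _ ih
  have hrec : ∀ j, u (j + 1) = (1 / 2 : ℝ) • u j + (1 / 2 : ℝ) • S (u j) := by
    intro j
    have : u (j + 1) = Rt (u j) := Function.iterate_succ_apply' Rt j x
    rw [this]
  -- Ishikawa
  have hd0 : Tendsto (fun j => ‖WeakDual.toStrongDual (S (u j) - u j)‖) atTop (𝓝 0) := by
    have h := ishikawa_aux (u := fun j => WeakDual.toStrongDual (u j))
      (v := fun j => WeakDual.toStrongDual (S (u j))) (M := M)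
      (fun j => by
        show WeakDual.toStrongDual (u (j + 1)) = (1 / 2 : ℝ) • WeakDual.toStrongDual (u j)
          + (1 / 2 : ℝ) • WeakDual.toStrongDual (S (u j))
        rw [hrec j]; simp only [map_add, map_smul])
      (fun i j => by
        show ‖WeakDual.toStrongDual (S (u i)) - WeakDual.toStrongDual (S (u j))‖
          ≤ ‖WeakDual.toStrongDual (u i) - WeakDual.toStrongDual (u j)‖
        rw [← map_sub, ← map_sub]
        calc ‖WeakDual.toStrongDual (S (u i) - S (u j))‖
            ≤ ‖WeakDual.toStrongDual (R (u i) - R (u j))‖ :=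
              hTne (Fin.last n) (R (u i)) (hRC _ (huC i)) (R (u j)) (hRC _ (huC j))
          _ ≤ ‖WeakDual.toStrongDual (u i - u j)‖ := hRne _ (huC i) _ (huC j))
      (fun i j => by
        show ‖WeakDual.toStrongDual (S (u i)) - WeakDual.toStrongDual (u j)‖ ≤ M
        rw [← map_sub]; exact hM _ (hSC _ (huC i)) _ (huC j))
    simpa only [← map_sub] using h
  have goal1 : Tendsto (fun α => ‖WeakDual.toStrongDual (S (u (k α)) - u (k α))‖) l (𝓝 0) :=
    hd0.comp hk
  -- R bound
  have hRbound : ∀ y ∈ C, ‖WeakDual.toStrongDual (R y - y)‖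
      ≤ 2 * ‖WeakDual.toStrongDual (S y - y)‖ := by
    intro y hy
    have hfixset : S y ∈ C ∧ ∀ i : Fin n, T i.castSucc (S y) = S y := by
      refine ⟨hSC y hy, fun i => ?_⟩
      show T i.castSucc (T (Fin.last n) (R y)) = _
      rw [hcomm i.castSucc (Fin.last n) (R y) (hRC y hy), (hRmaps hy).2 i]
    have hRS : R (S y) = S y := hRfix _ hfixset
    have hsplit : R y - y = (R y - S y) + (S y - y) := by abel
    have h1 : ‖WeakDual.toStrongDual (R y - S y)‖ ≤ ‖WeakDual.toStrongDual (S y - y)‖ := by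
      have h2 := hRne y hy (S y) (hSC y hy)
      rw [hRS] at h2
      calc ‖WeakDual.toStrongDual (R y - S y)‖ ≤ ‖WeakDual.toStrongDual (y - S y)‖ := h2
        _ = ‖WeakDual.toStrongDual (S y - y)‖ := by
            rw [show y - S y = -(S y - y) by abel, map_neg, norm_neg]
    calc ‖WeakDual.toStrongDual (R y - y)‖
        ≤ ‖WeakDual.toStrongDual (R y - S y)‖ + ‖WeakDual.toStrongDual (S y - y)‖ := by
          rw [hsplit, map_add]; exact norm_add_le _ _
      _ ≤ 2 * ‖WeakDual.toStrongDual (S y - y)‖ := by linarith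
  have goal2 : Tendsto (fun α => ‖WeakDual.toStrongDual (R (u (k α)) - u (k α))‖) l (𝓝 0) := by
    apply squeeze_zero (fun α => norm_nonneg _) (fun α => hRbound _ (huC (k α)))
    simpa using goal1.const_mul 2
  refine ⟨goal1, goal2, ?_⟩
  intro m
  show Tendsto (fun α => ‖WeakDual.toStrongDual (T m (u (k α)) - u (k α))‖) l (𝓝 0)
  have hTbound : ∀ y ∈ C, ‖WeakDual.toStrongDual (T m y - y)‖
      ≤ 4 * ‖WeakDual.toStrongDual (S y - y)‖ := by
    intro y hy
    have hsec : ‖WeakDual.toStrongDual (T m (R y) - y)‖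
        ≤ 2 * ‖WeakDual.toStrongDual (S y - y)‖ := by
      induction m using Fin.lastCases with
      | last =>
        have : T (Fin.last n) (R y) = S y := rfl
        rw [this]
        nlinarith [norm_nonneg (WeakDual.toStrongDual (S y - y))]
      | cast i =>
        rw [(hRmaps hy).2 i]
        exact hRbound y hy
    have hfirst : ‖WeakDual.toStrongDual (T m y - T m (R y))‖
        ≤ ‖WeakDual.toStrongDual (R y - y)‖ := by
      calc ‖WeakDual.toStrongDual (T m y - T m (R y))‖
          ≤ ‖WeakDual.toStrongDual (y - R y)‖ := hTne m y hy (R y) (hRC y hy)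
        _ = ‖WeakDual.toStrongDual (R y - y)‖ := by
            rw [show y - R y = -(R y - y) by abel, map_neg, norm_neg]
    have hsplit : T m y - y = (T m y - T m (R y)) + (T m (R y) - y) := by abel
    have hRb := hRbound y hy
    calc ‖WeakDual.toStrongDual (T m y - y)‖
        ≤ ‖WeakDual.toStrongDual (T m y - T m (R y))‖
          + ‖WeakDual.toStrongDual (T m (R y) - y)‖ := by
          rw [hsplit, map_add]; exact norm_add_le _ _
      _ ≤ 4 * ‖WeakDual.toStrongDual (S y - y)‖ := by linarith
  apply squeeze_zero (fun α => norm_nonneg _) (fun α => hTbound _ (huC (k α)))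
  simpa using goal1.const_mul 4
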